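/- For m ≥ 0 and k ≥ 0, (2k+n)!/[2k+n]_μ! = (n!/[n]_μ!) · (⌊(n+1)/2⌋ + 1/2)_k / (⌊(n+1)/2⌋ + μ + 1/2)_k, where (a)_k is the Pochhammer symbol; consequently J_n^μ(x) = (1/[n]_μ!)(x/2)^n · ₁F₂(⌊(n+1)/2⌋+1/2; n+1, ⌊(n+1)/2⌋+μ+1/2; −x²/4). -/

import Mathlib

/-- The deformed integer `[n]_μ = n + μ (1 - (-1)^n)`. -/
noncomputable def dIdx (μ : ℝ) (n : ℕ) : ℝ := n + μ * (1 - (-1 : ℝ) ^ n)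

/-- The deformed factorial `[n]_μ!`. -/
noncomputable def dFact (μ : ℝ) : ℕ → ℝ
  | 0 => 1
  | n + 1 => dIdx μ (n + 1) * dFact μ n

/-- The Pochhammer symbol `(a)_k = a(a+1)⋯(a+k-1)`. -/
noncomputable def poch (a : ℝ) (k : ℕ) : ℝ := ∏ i ∈ Finset.range k, (a + i)

/-- The deformed Bessel function `J_n^μ`. -/
noncomputable def Jmu (μ : ℝ) (n : ℕ) (x : ℝ) : ℝ :=
  ∑' k : ℕ, (-1 : ℝ) ^ k * (Nat.factorial (2 * k + n)) /
      ((Nat.factorial k) * (Nat.factorial (k + n)) * dFact μ (2 * k + n)) *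
    (x / 2) ^ (2 * k + n)

lemma dIdx_pos {μ : ℝ} (hμ : 0 ≤ μ) (m : ℕ) (hm : 1 ≤ m) : 0 < dIdx μ m := by
  have h1 : (-1 : ℝ) ^ m ≤ 1 := by
    rcases Nat.even_or_odd m with h | h
    · rw [h.neg_one_pow]
    · rw [h.neg_one_pow]; norm_num
  have h2 : 0 ≤ μ * (1 - (-1 : ℝ) ^ m) := mul_nonneg hμ (by linarith)
  have h3 : (1 : ℝ) ≤ (m : ℝ) := by exact_mod_cast hm
  unfold dIdx; linarith

lemma dFact_pos {μ : ℝ} (hμ : 0 ≤ μ) (m : ℕ) : 0 < dFact μ m := by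
  induction m with
  | zero => norm_num [dFact]
  | succ k ih =>
    rw [dFact]
    exact mul_pos (dIdx_pos hμ (k + 1) (Nat.succ_le_succ (Nat.zero_le k))) ih

lemma poch_succ (a : ℝ) (k : ℕ) : poch a (k + 1) = poch a k * (a + k) :=
  Finset.prod_range_succ _ _

lemma poch_zero (a : ℝ) : poch a 0 = 1 := Finset.prod_range_zero _

lemma poch_pos {a : ℝ} (ha : 0 < a) (k : ℕ) : 0 < poch a k := by
  apply Finset.prod_pos
  intro i _
  positivity

lemma fact_poch (n k : ℕ) : ((k + n).factorial : ℝ) = n.factorial * poch ((n : ℝ) + 1) k := by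
  induction k with
  | zero => simp [poch_zero]
  | succ k ih =>
    have : k + 1 + n = (k + n) + 1 := by omega
    rw [this, Nat.factorial_succ, poch_succ]
    push_cast
    rw [ih]
    ring

lemma key_idx (μ : ℝ) (n k : ℕ) :
    dIdx μ (2 * k + n + 1) * dIdx μ (2 * k + n + 1 + 1) *
      ((((n + 1) / 2 : ℕ) : ℝ) + 1 / 2 + k) =
    ((2 * k : ℝ) + n + 1) * ((2 * k : ℝ) + n + 2) *
      ((((n + 1) / 2 : ℕ) : ℝ) + μ + 1 / 2 + k) := by
  rcases Nat.even_or_odd n with ⟨m, hm⟩ | ⟨m, hm⟩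
  · subst hm
    have h1 : (m + m + 1) / 2 = m := by omega
    have hodd : Odd (2 * k + (m + m) + 1) := ⟨k + m, by ring⟩
    have heven : Even (2 * k + (m + m) + 1 + 1) := ⟨k + m + 1, by ring⟩
    rw [h1]
    unfold dIdx
    rw [hodd.neg_one_pow, heven.neg_one_pow]
    push_cast
    ring
  · subst hm
    have h1 : (2 * m + 1 + 1) / 2 = m + 1 := by omega
    have heven : Even (2 * k + (2 * m + 1) + 1) := ⟨k + m + 1, by ring⟩
    have hodd : Odd (2 * k + (2 * m + 1) + 1 + 1) := ⟨k + m + 1, by ring⟩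
    rw [h1]
    unfold dIdx
    rw [hodd.neg_one_pow, heven.neg_one_pow]
    push_cast
    ring

lemma key_prod (μ : ℝ) (n : ℕ) (k : ℕ) :
    ((2 * k + n).factorial : ℝ) * dFact μ n * poch ((((n + 1) / 2 : ℕ) : ℝ) + μ + 1 / 2) k =
    (n.factorial : ℝ) * poch ((((n + 1) / 2 : ℕ) : ℝ) + 1 / 2) k * dFact μ (2 * k + n) := by
  induction k with
  | zero => simp [poch_zero]
  | succ k ih =>
    have h2 : 2 * (k + 1) + n = (2 * k + n + 1) + 1 := by ring
    rw [h2, Nat.factorial_succ, dFact, poch_succ, poch_succ]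
    have h3 : 2 * k + n + 1 = (2 * k + n) + 1 := by ring
    rw [h3, Nat.factorial_succ, dFact]
    have hk := key_idx μ n k
    linear_combination (norm := (push_cast; ring1))
      (((2 * k : ℝ) + n + 1) * ((2 * k : ℝ) + n + 2) *
          ((((n + 1) / 2 : ℕ) : ℝ) + μ + 1 / 2 + k)) * ih -
        ((n.factorial : ℝ) * poch ((((n + 1) / 2 : ℕ) : ℝ) + 1 / 2) k * dFact μ (2 * k + n)) * hk

lemma div_aux (F D2 N Dn PA PB : ℝ) (hD2 : D2 ≠ 0) (hDn : Dn ≠ 0) (hPB : PB ≠ 0)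
    (h : F * Dn * PB = N * PA * D2) : F / D2 = N / Dn * PA / PB := by
  field_simp
  linear_combination h

lemma point_aux (F D2 N Dn PA PB PN Fk c : ℝ)
    (hD2 : D2 ≠ 0) (hDn : Dn ≠ 0) (hPB : PB ≠ 0) (hN : N ≠ 0) (hPN : PN ≠ 0) (hFk : Fk ≠ 0)
    (h : F * Dn * PB = N * PA * D2) :
    c * F / (Fk * (N * PN) * D2) = 1 / Dn * (c * (PA / (Fk * PN * PB))) := by
  field_simp
  linear_combination c * h

/-- The coefficient identity
`(2k+n)!/[2k+n]_μ! = (n!/[n]_μ!) (⌊(n+1)/2⌋+1/2)_k / (⌊(n+1)/2⌋+μ+1/2)_k`,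
and the resulting `₁F₂` hypergeometric expression for `J_n^μ`. -/
theorem Jmu_hypergeometric (μ : ℝ) (hμ : 0 ≤ μ) (n : ℕ) :
    (∀ k : ℕ,
      (Nat.factorial (2 * k + n) : ℝ) / dFact μ (2 * k + n) =
        ((Nat.factorial n : ℝ) / dFact μ n) *
          poch (((n + 1) / 2 : ℕ) + 1 / 2) k / poch (((n + 1) / 2 : ℕ) + μ + 1 / 2) k) ∧
    (∀ x : ℝ,
      Jmu μ n x = (1 / dFact μ n) * (x / 2) ^ n *
        ∑' k : ℕ, poch (((n + 1) / 2 : ℕ) + 1 / 2) k /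
            ((Nat.factorial k) * poch ((n : ℝ) + 1) k * poch (((n + 1) / 2 : ℕ) + μ + 1 / 2) k) *
          (-(x ^ 2) / 4) ^ k) := by
  have hb : (0 : ℝ) < (((n + 1) / 2 : ℕ) : ℝ) + μ + 1 / 2 := by positivity
  have hbk : ∀ k, poch ((((n + 1) / 2 : ℕ) : ℝ) + μ + 1 / 2) k ≠ 0 :=
    fun k => (poch_pos hb k).ne'
  have hdn : dFact μ n ≠ 0 := (dFact_pos hμ n).ne'
  have hd2 : ∀ k, dFact μ (2 * k + n) ≠ 0 := fun k => (dFact_pos hμ _).ne'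
  refine ⟨fun k => div_aux _ _ _ _ _ _ (hd2 k) hdn (hbk k) (key_prod μ n k), fun x => ?_⟩
  have hnk : ∀ k, poch ((n : ℝ) + 1) k ≠ 0 :=
    fun k => (poch_pos (by positivity) k).ne'
  have hfk : ∀ k : ℕ, (Nat.factorial k : ℝ) ≠ 0 := fun k => by positivity
  rw [Jmu, ← tsum_mul_left]
  apply tsum_congr
  intro k
  have hpow : (x / 2) ^ (2 * k + n) = (x / 2) ^ n * ((x / 2) ^ 2) ^ k := by
    rw [← pow_mul, ← pow_add]; ring_nf
  have hneg : (-(x ^ 2) / 4 : ℝ) ^ k = (-1 : ℝ) ^ k * ((x / 2) ^ 2) ^ k := by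
    rw [← mul_pow]; ring_nf
  have hf : ((k + n).factorial : ℝ) = n.factorial * poch ((n : ℝ) + 1) k := fact_poch n k
  have e := point_aux _ _ _ _ _ _ _ _ ((-1 : ℝ) ^ k) (hd2 k) hdn (hbk k)
    (hfk n) (hnk k) (hfk k) (key_prod μ n k)
  rw [hpow, hneg, hf]
  linear_combination ((x / 2) ^ n * ((x / 2) ^ 2) ^ k) * e
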